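/- Let p_1, …, p_M ∈ Z_q^r. Then the sum of Lee distances over all unordered pairs satisfies ∑_{i<j} d_L(p_i, p_j) ≤ S·M²·r/(2q), where S = q²/4 if q is even and S = (q²−1)/4 if q is odd. -/

import Mathlib

/-- Lee distance between two symbols of `ZMod q` (representatives in `{0,…,q-1}`). -/
def leeDistSym (q : ℕ) (x y : ZMod q) : ℕ := min (x - y).val (y - x).val

/-- Lee distance between two vectors over `ZMod q`. -/
def leeDist {q n : ℕ} (x y : Fin n → ZMod q) : ℕ := ∑ i, leeDistSym q (x i) (y i)

/-- Lee weight of a symbol of `ZMod q`. -/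
def leeWtSym (q : ℕ) (x : ZMod q) : ℕ := min x.val (q - x.val)

/-- Lee weight of a vector over `ZMod q`. -/
def leeWt {q n : ℕ} (x : Fin n → ZMod q) : ℕ := ∑ i, leeWtSym q (x i)

section Helpers
open Finset

private lemma modCases {x q : ℕ} (hq : 0 < q) (hx : x < 2 * q) :
    x % q = if x < q then x else x - q := by
  split
  · exact Nat.mod_eq_of_lt ‹_›
  · rw [Nat.mod_eq_sub_mod (by omega), Nat.mod_eq_of_lt (by omega)]

/-- Transfer a cardinality over `ZMod q` to `range q`. -/
private lemma card_filter_zmod (q : ℕ) [NeZero q] (P : ℕ → Prop) [DecidablePred P] :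
    ((univ : Finset (ZMod q)).filter (fun t => P t.val)).card
      = ((Finset.range q).filter P).card := by
  refine Finset.card_nbij' (fun t => t.val) (fun n => ((n : ZMod q))) ?_ ?_ ?_ ?_
  · intro a ha
    simp only [mem_coe, mem_filter, mem_univ, true_and, mem_range] at *
    exact ⟨a.val_lt, ha⟩
  · intro n hn
    simp only [mem_coe, mem_filter, mem_range, mem_univ, true_and] at *
    rw [ZMod.val_cast_of_lt hn.1]; exact hn.2
  · intro a _; exact ZMod.natCast_rightInverse a
  · intro n hn
    simp only [mem_coe, mem_filter, mem_range] at hn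
    exact ZMod.val_cast_of_lt hn.1

/-- Substituting `t ↦ a - t` is a bijection of `ZMod q`. -/
private lemma card_filter_sub (q : ℕ) [NeZero q] (a : ZMod q) (P : ZMod q → Prop)
    [DecidablePred P] :
    ((univ : Finset (ZMod q)).filter (fun t => P (a - t))).card
      = ((univ : Finset (ZMod q)).filter P).card := by
  refine Finset.card_nbij' (fun t => a - t) (fun v => a - v) ?_ ?_ ?_ ?_
  · intro t ht; simp only [mem_coe, mem_filter, mem_univ, true_and] at *; exact ht
  · intro v hv; simp only [mem_coe, mem_filter, mem_univ, true_and] at *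
    rwa [sub_sub_cancel]
  · intro t _; exact sub_sub_cancel a t
  · intro v _; exact sub_sub_cancel a v

/-- Every symbol lies in exactly `q/2` arcs. -/
private lemma card_arc (q : ℕ) [NeZero q] (a : ZMod q) :
    ((univ : Finset (ZMod q)).filter (fun t => (a - t).val < q / 2)).card = q / 2 := by
  rw [card_filter_sub q a (fun v => v.val < q / 2),
    card_filter_zmod q (fun j => j < q / 2)]
  have : (Finset.range q).filter (fun j => j < q / 2) = Finset.range (q / 2) := by
    ext j
    simp only [mem_filter, mem_range]
    omega
  rw [this, Finset.card_range]

private lemma leeDistSym_eq (q : ℕ) (hq : 2 ≤ q) (a b : ZMod q) :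
    leeDistSym q a b = min ((b - a).val) (q - (b - a).val) := by
  haveI : NeZero q := ⟨by omega⟩
  have h0 : (a - b) + (b - a) = 0 := by ring
  have h := ZMod.val_add (a - b) (b - a)
  rw [h0, ZMod.val_zero] at h
  have h1 : (a - b).val < q := ZMod.val_lt _
  have h2 : (b - a).val < q := ZMod.val_lt _
  rw [modCases (by omega) (by omega)] at h
  unfold leeDistSym
  split_ifs at h <;> omega

private lemma card_inter_arcs (q : ℕ) [NeZero q] (hq : 2 ≤ q) (a b : ZMod q) :
    ((univ : Finset (ZMod q)).filter
        (fun t => (a - t).val < q / 2 ∧ (b - t).val < q / 2)).card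
      = q / 2 - leeDistSym q a b := by
  set k := (b - a).val with hk
  have hkq : k < q := ZMod.val_lt _
  have h1 : ((univ : Finset (ZMod q)).filter
        (fun t => (a - t).val < q / 2 ∧ (b - t).val < q / 2)).card
      = ((univ : Finset (ZMod q)).filter
        (fun v => v.val < q / 2 ∧ ((b - a) + v).val < q / 2)).card := by
    rw [← card_filter_sub q a (fun v => v.val < q / 2 ∧ ((b - a) + v).val < q / 2)]
    congr 1
    apply Finset.filter_congr
    intro t _
    have : b - a + (a - t) = b - t := by ring
    rw [this]
  rw [h1]
  have h2 : ∀ v : ZMod q, (((b - a) + v).val < q / 2) = ((k + v.val) % q < q / 2) := by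
    intro v; rw [ZMod.val_add]
  have h3 : ((univ : Finset (ZMod q)).filter
        (fun v => v.val < q / 2 ∧ ((b - a) + v).val < q / 2)).card
      = ((Finset.range q).filter (fun j => j < q / 2 ∧ (k + j) % q < q / 2)).card := by
    rw [← card_filter_zmod q (fun j => j < q / 2 ∧ (k + j) % q < q / 2)]
    congr 1
    apply Finset.filter_congr
    intro v _
    rw [h2 v]
  rw [h3]
  have h4 : (Finset.range q).filter (fun j => j < q / 2 ∧ (k + j) % q < q / 2)
      = Finset.range (q / 2 - k) ∪ Finset.Ico (q - k) (q / 2) := by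
    ext j
    simp only [mem_filter, mem_range, mem_union, mem_Ico]
    by_cases hj : j < q
    · have hmod : (k + j) % q = if k + j < q then k + j else k + j - q :=
        modCases (by omega) (by omega)
      rw [hmod]
      split_ifs <;> omega
    · constructor
      · intro h; omega
      · intro h; omega
  rw [h4, Finset.card_union_of_disjoint, Finset.card_range, Nat.card_Ico]
  · rw [leeDistSym_eq q hq a b, ← hk]
    omega
  · rw [Finset.disjoint_left]
    intro j hj1 hj2
    simp only [mem_range, mem_Ico] at *
    omega

private lemma card_xor {α : Type*} [Fintype α] [DecidableEq α] (P Q : α → Prop)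
    [DecidablePred P] [DecidablePred Q] :
    ((univ : Finset α).filter (fun t => ¬(P t ↔ Q t))).card
        + 2 * ((univ : Finset α).filter (fun t => P t ∧ Q t)).card
      = ((univ : Finset α).filter P).card + ((univ : Finset α).filter Q).card := by
  have h1 : (univ : Finset α).filter (fun t => ¬(P t ↔ Q t))
      = ((univ.filter P) ∪ (univ.filter Q)) \ ((univ.filter P) ∩ (univ.filter Q)) := by
    ext t
    simp only [mem_filter, mem_univ, true_and, mem_sdiff, mem_union, mem_inter]
    tauto
  have h3 : (univ.filter P) ∩ (univ.filter Q) = univ.filter (fun t => P t ∧ Q t) := by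
    ext t
    simp only [mem_filter, mem_univ, true_and, mem_inter]
  have h2 := Finset.card_union_add_card_inter (univ.filter P) (univ.filter Q)
  have h5 : ((univ.filter P) ∩ (univ.filter Q)).card ≤ ((univ.filter P) ∪ (univ.filter Q)).card :=
    Finset.card_le_card Finset.inter_subset_union
  rw [h1, Finset.card_sdiff_of_subset Finset.inter_subset_union, ← h3]
  omega

private lemma card_sep (q : ℕ) [NeZero q] (hq : 2 ≤ q) (a b : ZMod q) :
    ((univ : Finset (ZMod q)).filter
        (fun t => ¬(((a - t).val < q / 2) ↔ ((b - t).val < q / 2)))).card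
      = 2 * leeDistSym q a b := by
  have hx := card_xor (fun t : ZMod q => (a - t).val < q / 2)
      (fun t : ZMod q => (b - t).val < q / 2)
  rw [card_arc, card_arc, card_inter_arcs q hq a b] at hx
  have hd : leeDistSym q a b ≤ q / 2 := by
    rw [leeDistSym_eq q hq a b]
    have := ZMod.val_lt (b - a)
    omega
  omega

private lemma sum_pairs (M : ℕ) (P : Fin M → Prop) [DecidablePred P] :
    (∑ i : Fin M, ∑ j : Fin M, if ¬(P i ↔ P j) then 1 else 0)
      = 2 * ((univ : Finset (Fin M)).filter P).card
          * (M - ((univ : Finset (Fin M)).filter P).card) := by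
  set s := ((univ : Finset (Fin M)).filter P).card with hs
  have hsM : s ≤ M := by
    rw [hs]
    have := Finset.card_filter_le (univ : Finset (Fin M)) P
    simpa using this
  have hnot : ((univ : Finset (Fin M)).filter (fun j => ¬ P j)).card = M - s := by
    rw [Finset.filter_not, Finset.card_sdiff_of_subset (Finset.filter_subset _ _)]
    simp [hs]
  have key : ∀ i : Fin M, (∑ j : Fin M, if ¬(P i ↔ P j) then 1 else 0)
      = if P i then M - s else s := by
    intro i
    rw [← Finset.card_filter]
    by_cases h : P i
    · rw [if_pos h, ← hnot]
      congr 1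
      apply Finset.filter_congr
      intro j _
      simp [h]
    · rw [if_neg h, hs]
      congr 1
      apply Finset.filter_congr
      intro j _
      simp [h]
  rw [Finset.sum_congr rfl (fun i _ => key i), Finset.sum_ite, Finset.sum_const,
    Finset.sum_const, smul_eq_mul, smul_eq_mul, ← hs, hnot]
  ring

private lemma coord_bound (q M : ℕ) (hq : 2 ≤ q) (x : Fin M → ZMod q) :
    q * (∑ i : Fin M, ∑ j : Fin M, leeDistSym q (x i) (x j))
      ≤ (q / 2) * (q - q / 2) * M ^ 2 := by
  haveI : NeZero q := ⟨by omega⟩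
  set s : ZMod q → ℕ :=
    fun t => ((univ : Finset (Fin M)).filter (fun i => (x i - t).val < q / 2)).card with hsdef
  have hA : 2 * (∑ i : Fin M, ∑ j : Fin M, leeDistSym q (x i) (x j))
      = ∑ t : ZMod q, 2 * s t * (M - s t) := by
    calc 2 * (∑ i : Fin M, ∑ j : Fin M, leeDistSym q (x i) (x j))
        = ∑ i : Fin M, ∑ j : Fin M, 2 * leeDistSym q (x i) (x j) := by
          rw [Finset.mul_sum]
          exact Finset.sum_congr rfl fun i _ => Finset.mul_sum _ _ _
      _ = ∑ i : Fin M, ∑ j : Fin M, ∑ t : ZMod q,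
            (if ¬(((x i - t).val < q / 2) ↔ ((x j - t).val < q / 2)) then 1 else 0) := by
          refine Finset.sum_congr rfl fun i _ => Finset.sum_congr rfl fun j _ => ?_
          rw [← card_sep q hq (x i) (x j), Finset.card_filter]
      _ = ∑ t : ZMod q, ∑ i : Fin M, ∑ j : Fin M,
            (if ¬(((x i - t).val < q / 2) ↔ ((x j - t).val < q / 2)) then 1 else 0) := by
          rw [Finset.sum_congr rfl fun i (_ : i ∈ univ) => Finset.sum_comm]
          exact Finset.sum_comm
      _ = ∑ t : ZMod q, 2 * s t * (M - s t) :=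
          Finset.sum_congr rfl fun t _ => sum_pairs M (fun i => (x i - t).val < q / 2)
  have hB : ∑ t : ZMod q, s t = (q / 2) * M := by
    rw [hsdef]
    simp only [Finset.card_filter]
    rw [Finset.sum_comm]
    have : ∀ i : Fin M, (∑ t : ZMod q,
        if (x i - t).val < q / 2 then 1 else 0) = q / 2 := by
      intro i
      rw [← Finset.card_filter]
      exact card_arc q (x i)
    rw [Finset.sum_congr rfl fun i _ => this i, Finset.sum_const, smul_eq_mul]
    simp [mul_comm]
  have hC : ((q / 2) * M) ^ 2 ≤ q * ∑ t : ZMod q, s t ^ 2 := by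
    rw [← hB]
    have := sq_sum_le_card_mul_sum_sq (s := (univ : Finset (ZMod q))) (f := s)
    simpa [Finset.card_univ, ZMod.card] using this
  have hsM : ∀ t : ZMod q, s t ≤ M := by
    intro t
    rw [hsdef]
    have := Finset.card_filter_le (univ : Finset (Fin M)) (fun i => (x i - t).val < q / 2)
    simpa using this
  have hD : (∑ t : ZMod q, s t * (M - s t)) + (∑ t : ZMod q, s t ^ 2)
      = M * ((q / 2) * M) := by
    rw [← hB, Finset.mul_sum, ← Finset.sum_add_distrib]
    refine Finset.sum_congr rfl fun t _ => ?_
    obtain ⟨d, hd⟩ := Nat.le.dest (hsM t)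
    rw [← hd, Nat.add_sub_cancel_left]
    ring
  have hE : (∑ i : Fin M, ∑ j : Fin M, leeDistSym q (x i) (x j))
      = ∑ t : ZMod q, s t * (M - s t) := by
    have h2 : ∑ t : ZMod q, 2 * s t * (M - s t) = 2 * ∑ t : ZMod q, s t * (M - s t) := by
      rw [Finset.mul_sum]
      exact Finset.sum_congr rfl fun t _ => by ring
    omega
  rw [hE]
  set m := q / 2 with hm
  set T := ∑ t : ZMod q, s t * (M - s t)
  set Q2 := ∑ t : ZMod q, s t ^ 2
  obtain ⟨c, hc⟩ := Nat.le.dest (show m ≤ q by omega)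
  have hqm : q - m = c := by omega
  rw [hqm]
  have h1 : q * T + q * Q2 = q * (M * (m * M)) := by
    rw [← Nat.left_distrib, hD]
  have h2 : m * m * (M * M) ≤ q * Q2 := by
    calc m * m * (M * M) = (m * M) ^ 2 := by ring
    _ ≤ q * Q2 := hC
  have h3 : q * (M * (m * M)) = m * m * (M * M) + m * c * (M * M) := by
    rw [← hc]; ring
  have h4 : m * c * M ^ 2 = m * c * (M * M) := by ring
  rw [h4]
  linarith

end Helpers

open Finset in
theorem sum_pairwise_lee_dist_le (q r M : ℕ) (hq : 2 ≤ q)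
    (p : Fin M → Fin r → ZMod q) :
    2 * q * (∑ i : Fin M, ∑ j : Fin M, if i < j then leeDist (p i) (p j) else 0)
      ≤ (if Even q then q ^ 2 / 4 else (q ^ 2 - 1) / 4) * M ^ 2 * r := by
  haveI : NeZero q := ⟨by omega⟩
  have hdiag : ∀ i : Fin M, leeDist (p i) (p i) = 0 := by
    intro i; simp [leeDist, leeDistSym, sub_self]
  have hsymm : ∀ i j : Fin M, leeDist (p i) (p j) = leeDist (p j) (p i) := by
    intro i j
    unfold leeDist leeDistSym
    exact Finset.sum_congr rfl fun k _ => min_comm _ _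
  have hsplit : (∑ i : Fin M, ∑ j : Fin M, leeDist (p i) (p j))
      = 2 * ∑ i : Fin M, ∑ j : Fin M, (if i < j then leeDist (p i) (p j) else 0) := by
    have tri : ∀ i j : Fin M, leeDist (p i) (p j)
        = (if i < j then leeDist (p i) (p j) else 0)
          + (if j < i then leeDist (p i) (p j) else 0) := by
      intro i j
      rcases lt_trichotomy i j with h | h | h
      · rw [if_pos h, if_neg (lt_asymm h), Nat.add_zero]
      · subst h; simp [hdiag i]
      · rw [if_neg (lt_asymm h), if_pos h, Nat.zero_add]
    calc (∑ i : Fin M, ∑ j : Fin M, leeDist (p i) (p j))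
        = (∑ i : Fin M, ∑ j : Fin M, ((if i < j then leeDist (p i) (p j) else 0)
            + (if j < i then leeDist (p i) (p j) else 0))) :=
          Finset.sum_congr rfl fun i _ => Finset.sum_congr rfl fun j _ => tri i j
      _ = (∑ i : Fin M, ∑ j : Fin M, (if i < j then leeDist (p i) (p j) else 0))
          + (∑ i : Fin M, ∑ j : Fin M, (if j < i then leeDist (p i) (p j) else 0)) := by
          rw [← Finset.sum_add_distrib]
          exact Finset.sum_congr rfl fun i _ => Finset.sum_add_distrib
      _ = 2 * ∑ i : Fin M, ∑ j : Fin M, (if i < j then leeDist (p i) (p j) else 0) := by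
          have : (∑ i : Fin M, ∑ j : Fin M, (if j < i then leeDist (p i) (p j) else 0))
              = ∑ i : Fin M, ∑ j : Fin M, (if i < j then leeDist (p i) (p j) else 0) := by
            rw [Finset.sum_comm]
            exact Finset.sum_congr rfl fun i _ => Finset.sum_congr rfl fun j _ => by
              rcases lt_or_ge i j with h | h
              · rw [if_pos h, if_pos h, hsymm i j]
              · rw [if_neg (by omega : ¬ i < j), if_neg (by omega : ¬ i < j)]
          rw [this, two_mul]
  have hswap : (∑ i : Fin M, ∑ j : Fin M, leeDist (p i) (p j))
      = ∑ k : Fin r, ∑ i : Fin M, ∑ j : Fin M, leeDistSym q (p i k) (p j k) := by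
    simp only [leeDist]
    rw [Finset.sum_congr rfl fun i (_ : i ∈ univ) => Finset.sum_comm]
    exact Finset.sum_comm
  have hcoord : ∀ k : Fin r,
      q * (∑ i : Fin M, ∑ j : Fin M, leeDistSym q (p i k) (p j k))
        ≤ (q / 2) * (q - q / 2) * M ^ 2 :=
    fun k => coord_bound q M hq (fun i => p i k)
  have hS : (q / 2) * (q - q / 2) = (if Even q then q ^ 2 / 4 else (q ^ 2 - 1) / 4) := by
    rcases Nat.even_or_odd q with he | ho
    · rw [if_pos he]
      obtain ⟨c, hc⟩ := he
      subst hc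
      have h1 : (c + c) ^ 2 = 4 * (c * c) := by ring
      rw [h1, Nat.mul_div_cancel_left _ (by norm_num : 0 < 4),
        (by omega : (c + c) / 2 = c), (by omega : c + c - c = c)]
    · rw [if_neg (Nat.not_even_iff_odd.mpr ho)]
      obtain ⟨c, hc⟩ := ho
      subst hc
      have h1 : (2 * c + 1) ^ 2 - 1 = 4 * (c * (c + 1)) := by
        have h : (2 * c + 1) ^ 2 = 4 * (c * (c + 1)) + 1 := by ring
        rw [h, Nat.add_sub_cancel]
      rw [h1, Nat.mul_div_cancel_left _ (by norm_num : 0 < 4),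
        (by omega : (2 * c + 1) / 2 = c), (by omega : 2 * c + 1 - c = c + 1)]
  calc 2 * q * (∑ i : Fin M, ∑ j : Fin M, if i < j then leeDist (p i) (p j) else 0)
      = q * (∑ i : Fin M, ∑ j : Fin M, leeDist (p i) (p j)) := by rw [hsplit]; ring
    _ = ∑ k : Fin r, q * (∑ i : Fin M, ∑ j : Fin M, leeDistSym q (p i k) (p j k)) := by
        rw [hswap, Finset.mul_sum]
    _ ≤ ∑ k : Fin r, (q / 2) * (q - q / 2) * M ^ 2 :=
        Finset.sum_le_sum fun k _ => hcoord k
    _ = (q / 2) * (q - q / 2) * M ^ 2 * r := by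
        rw [Finset.sum_const, Finset.card_univ, Fintype.card_fin, smul_eq_mul, mul_comm]
    _ = (if Even q then q ^ 2 / 4 else (q ^ 2 - 1) / 4) * M ^ 2 * r := by rw [hS]
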